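/- Let (X, ν) be a measure space and let Φ : ℝ × X → X be jointly measurable with each Φ_s := Φ(s,·) measure-preserving and Φ_{−s} ∘ Φ_s = id ν-a.e. for every s. Let R : X → X be measure-preserving with R ∘ R = id and Φ_{−s} = R ∘ Φ_s ∘ R ν-a.e. for every s. For λ > 0 and g ∈ L²(ν; ℝ) set (Q_λ g)(x) = ∫_{−∞}^0 λ e^{λ s} g(Φ_s x) ds. Then for all g, h ∈ L²(ν; ℝ): ∫_X h(x) (Q_λ g)(x) dν(x) = ∫_X g(Rx) · Q_λ(h ∘ R)(x) dν(x). -/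

import Mathlib

open MeasureTheory Real Set
open scoped ENNReal NNReal

set_option maxHeartbeats 2000000

namespace Stmt11Aux

variable {X : Type*} [MeasurableSpace X]

/-- Cauchy–Schwarz for the lintegral of a product of (extended) norms. -/
lemma lintegral_mul_le_CS (ν : Measure X) {u v : X → ℝ} (hu : AEStronglyMeasurable u ν)
    (hv : AEStronglyMeasurable v ν) :
    ∫⁻ x, (‖u x‖₊ : ℝ≥0∞) * (‖v x‖₊ : ℝ≥0∞) ∂ν ≤ eLpNorm u 2 ν * eLpNorm v 2 ν := by
  have hconj : Real.HolderConjugate 2 2 := Real.HolderConjugate.two_two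
  have h2 := ENNReal.lintegral_mul_le_Lp_mul_Lq ν hconj hu.enorm hv.enorm
  simp only [Pi.mul_apply] at h2
  rw [eLpNorm_eq_lintegral_rpow_enorm_toReal (by norm_num) (by norm_num : (2:ℝ≥0∞) ≠ ∞),
    eLpNorm_eq_lintegral_rpow_enorm_toReal (by norm_num) (by norm_num : (2:ℝ≥0∞) ≠ ∞)]
  simpa [ENNReal.toReal_ofNat, enorm_eq_nnnorm] using h2

/-- Integrability of the exponential weight on `(-∞, 0]`. -/
lemma integrable_w {lam : ℝ} (hlam : 0 < lam) :
    Integrable (fun s : ℝ => lam * Real.exp (lam * s)) (volume.restrict (Iic (0 : ℝ))) := by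
  have hF : Integrable ((Iic (0 : ℝ)).indicator Real.exp) volume :=
    (integrable_indicator_iff measurableSet_Iic).2 (integrableOn_exp_Iic 0)
  have h2 : Integrable (fun x : ℝ => (Iic (0 : ℝ)).indicator Real.exp (lam * x)) volume :=
    (integrable_comp_mul_left_iff _ hlam.ne').2 hF
  have h3 : (fun x : ℝ => (Iic (0 : ℝ)).indicator Real.exp (lam * x)) =
      (Iic (0 : ℝ)).indicator (fun s => Real.exp (lam * s)) := by
    funext x
    have hiff : lam * x ∈ Iic (0 : ℝ) ↔ x ∈ Iic (0 : ℝ) := by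
      simp only [mem_Iic]
      constructor
      · intro hx
        by_contra hc
        push_neg at hc
        nlinarith
      · intro hx
        exact mul_nonpos_of_nonneg_of_nonpos hlam.le hx
    by_cases hx : x ∈ Iic (0 : ℝ)
    · rw [indicator_of_mem (hiff.2 hx), indicator_of_mem hx]
    · rw [indicator_of_notMem (fun hc => hx (hiff.1 hc)), indicator_of_notMem hx]
  rw [h3] at h2
  have h4 : IntegrableOn (fun s : ℝ => Real.exp (lam * s)) (Iic (0 : ℝ)) volume :=
    (integrable_indicator_iff measurableSet_Iic).1 h2
  exact h4.const_mul lam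

/-- The key Fubini-type rearrangement for one side of the adjoint identity,
valid for an arbitrary measure `ν` thanks to a σ-finite carrier set. -/
lemma side (ν : Measure X) (Ψ : ℝ → X → X)
    (hΨ : Measurable fun p : ℝ × X => Ψ p.1 p.2)
    (hΨmp : ∀ s : ℝ, MeasurePreserving (Ψ s) ν ν)
    {lam : ℝ} (hlam : 0 < lam)
    (a b : X → ℝ) (ha : MemLp a 2 ν) (hb : MemLp b 2 ν) :
    ∫ x, a x * (∫ s in Iic (0 : ℝ), lam * Real.exp (lam * s) * b (Ψ s x)) ∂ν =
      ∫ s in Iic (0 : ℝ), lam * Real.exp (lam * s) * ∫ x, a x * b (Ψ s x) ∂ν := by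
  set w : ℝ → ℝ := fun s => lam * Real.exp (lam * s) with hw
  have hwm : Measurable w :=
    (continuous_const.mul (Real.continuous_exp.comp (continuous_const.mul continuous_id))).measurable
  have hwint : Integrable w (volume.restrict (Iic (0 : ℝ))) := integrable_w hlam
  -- measurable representatives
  set a' : X → ℝ := ha.aestronglyMeasurable.mk a with ha'def
  have ha'sm : StronglyMeasurable a' := ha.aestronglyMeasurable.stronglyMeasurable_mk
  have ha'm : Measurable a' := ha'sm.measurable
  have haa' : a =ᵐ[ν] a' := ha.aestronglyMeasurable.ae_eq_mk
  have ha'2 : MemLp a' 2 ν := (memLp_congr_ae haa').1 ha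
  set b' : X → ℝ := hb.aestronglyMeasurable.mk b with hb'def
  have hb'sm : StronglyMeasurable b' := hb.aestronglyMeasurable.stronglyMeasurable_mk
  have hb'm : Measurable b' := hb'sm.measurable
  have hbb' : b =ᵐ[ν] b' := hb.aestronglyMeasurable.ae_eq_mk
  have hb'2 : MemLp b' 2 ν := (memLp_congr_ae hbb').1 hb
  -- a null set containing the discrepancy of b and b'
  set N : Set X := toMeasurable ν {x | b x ≠ b' x} with hNdef
  have hNmeas : MeasurableSet N := measurableSet_toMeasurable _ _
  have hNnull : ν N = 0 := by
    rw [hNdef, measure_toMeasurable]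
    exact hbb'
  have hNsub : {x | b x ≠ b' x} ⊆ N := subset_toMeasurable _ _
  -- σ-finite carrier set for a
  have hafin := ha.aefinStronglyMeasurable (by norm_num) (by norm_num : (2:ℝ≥0∞) ≠ ∞)
  set t : Set X := hafin.sigmaFiniteSet with htdef
  have htm : MeasurableSet t := hafin.measurableSet
  haveI : SigmaFinite (ν.restrict t) := hafin.sigmaFinite_restrict
  have ha0 : ∀ᵐ x ∂ν, x ∈ tᶜ → a x = 0 := by
    have := hafin.ae_eq_zero_compl
    exact ae_imp_of_ae_restrict this
  -- comparison of b ∘ Ψ s and b' ∘ Ψ s for each fixed s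
  have hbs : ∀ s : ℝ, (fun x => b (Ψ s x)) =ᵐ[ν] fun x => b' (Ψ s x) := by
    intro s
    have := ae_eq_comp (f := Ψ s) (hΨmp s).measurable.aemeasurable
      (g := b) (g' := b') (by rw [(hΨmp s).map_eq]; exact hbb')
    exact this
  -- preimage of N under each Ψ s is null
  have hpre : ∀ s : ℝ, ν (Ψ s ⁻¹' N) = 0 := fun s => by
    rw [(hΨmp s).measure_preimage hNmeas.nullMeasurableSet]; exact hNnull
  -- the "bad" set in the product space is null
  have hPmeas : MeasurableSet {z : X × ℝ | Ψ z.2 z.1 ∈ N} := by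
    have hm : Measurable fun z : X × ℝ => Ψ z.2 z.1 := hΨ.comp measurable_swap
    exact hm hNmeas
  have hprod0 :
      ((ν.restrict t).prod (volume.restrict (Iic (0 : ℝ)))) {z : X × ℝ | Ψ z.2 z.1 ∈ N} = 0 := by
    rw [Measure.prod_apply_symm hPmeas]
    have hz : ∀ s : ℝ, (ν.restrict t) ((fun x => (x, s)) ⁻¹' {z : X × ℝ | Ψ z.2 z.1 ∈ N}) = 0 := by
      intro s
      have hrw : ((fun x => (x, s)) ⁻¹' {z : X × ℝ | Ψ z.2 z.1 ∈ N}) = Ψ s ⁻¹' N := rfl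
      rw [hrw, Measure.restrict_apply ((hΨmp s).measurable hNmeas)]
      exact le_antisymm (le_trans (measure_mono inter_subset_left) (hpre s).le) zero_le
    simp only [hz, lintegral_zero]
  have hae2 : ∀ᵐ x ∂(ν.restrict t), ∀ᵐ s ∂(volume.restrict (Iic (0 : ℝ))), Ψ s x ∉ N := by
    have hae : ∀ᵐ z ∂((ν.restrict t).prod (volume.restrict (Iic (0 : ℝ)))), Ψ z.2 z.1 ∉ N := by
      rw [ae_iff]
      simpa [not_not] using hprod0
    exact Measure.ae_ae_of_ae_prod hae
  -- replace b by b' in the inner integral, a.e. on the carrier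
  have hbc : ∀ᵐ x ∂(ν.restrict t),
      (∫ s in Iic (0 : ℝ), w s * b (Ψ s x)) = ∫ s in Iic (0 : ℝ), w s * b' (Ψ s x) := by
    filter_upwards [hae2] with x hx
    refine integral_congr_ae ?_
    filter_upwards [hx] with s hs
    have hbe : b (Ψ s x) = b' (Ψ s x) := by
      by_contra hne
      exact hs (hNsub hne)
    rw [hbe]
  -- integrability on the product of the σ-finite carrier and the weight measure
  have hC : eLpNorm a' 2 ν * eLpNorm b' 2 ν ≠ ∞ :=
    ENNReal.mul_ne_top ha'2.2.ne hb'2.2.ne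
  have hFm : Measurable fun z : X × ℝ => a' z.1 * (w z.2 * b' (Ψ z.2 z.1)) :=
    (ha'm.comp measurable_fst).mul
      ((hwm.comp measurable_snd).mul (hb'm.comp (hΨ.comp measurable_swap)))
  have hK : Integrable (Function.uncurry fun x s => a' x * (w s * b' (Ψ s x)))
      ((ν.restrict t).prod (volume.restrict (Iic (0 : ℝ)))) := by
    refine ⟨(show Measurable (Function.uncurry fun x s => a' x * (w s * b' (Ψ s x))) from
      hFm).aestronglyMeasurable, ?_⟩
    have hFm' : AEMeasurable
        (fun z : X × ℝ => (‖a' z.1 * (w z.2 * b' (Ψ z.2 z.1))‖₊ : ℝ≥0∞))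
        ((ν.restrict t).prod (volume.restrict (Iic (0 : ℝ)))) := hFm.enorm.aemeasurable
    have hsymm := lintegral_prod_symm
      (μ := ν.restrict t) (ν := volume.restrict (Iic (0 : ℝ)))
      (fun z : X × ℝ => (‖a' z.1 * (w z.2 * b' (Ψ z.2 z.1))‖₊ : ℝ≥0∞)) hFm'
    rw [hasFiniteIntegral_def]
    calc
      ∫⁻ z, (‖Function.uncurry (fun x s => a' x * (w s * b' (Ψ s x))) z‖₊ : ℝ≥0∞)
          ∂((ν.restrict t).prod (volume.restrict (Iic (0 : ℝ))))
        = ∫⁻ s, ∫⁻ x, (‖a' x * (w s * b' (Ψ s x))‖₊ : ℝ≥0∞) ∂(ν.restrict t)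
            ∂(volume.restrict (Iic (0 : ℝ))) := hsymm
      _ ≤ ∫⁻ s, (‖w s‖₊ : ℝ≥0∞) * (eLpNorm a' 2 ν * eLpNorm b' 2 ν)
            ∂(volume.restrict (Iic (0 : ℝ))) := by
          refine lintegral_mono fun s => ?_
          calc
            ∫⁻ x, (‖a' x * (w s * b' (Ψ s x))‖₊ : ℝ≥0∞) ∂(ν.restrict t)
              ≤ ∫⁻ x, (‖a' x * (w s * b' (Ψ s x))‖₊ : ℝ≥0∞) ∂ν :=
                setLIntegral_le_lintegral _ _
            _ = ∫⁻ x, (‖w s‖₊ : ℝ≥0∞) * ((‖a' x‖₊ : ℝ≥0∞) * (‖b' (Ψ s x)‖₊ : ℝ≥0∞)) ∂ν := by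
                refine lintegral_congr fun x => ?_
                rw [nnnorm_mul, nnnorm_mul, ENNReal.coe_mul, ENNReal.coe_mul]
                ring
            _ = (‖w s‖₊ : ℝ≥0∞) * ∫⁻ x, (‖a' x‖₊ : ℝ≥0∞) * (‖b' (Ψ s x)‖₊ : ℝ≥0∞) ∂ν :=
                lintegral_const_mul' _ _ ENNReal.coe_ne_top
            _ ≤ (‖w s‖₊ : ℝ≥0∞) * (eLpNorm a' 2 ν * eLpNorm b' 2 ν) := by
                gcongr
                have hcs := lintegral_mul_le_CS ν ha'sm.aestronglyMeasurable
                  ((hb'm.comp (hΨmp s).measurable).aestronglyMeasurable)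
                refine hcs.trans (le_of_eq ?_)
                congr 1
                have := eLpNorm_comp_measurePreserving (p := 2)
                  hb'sm.aestronglyMeasurable (hΨmp s)
                simpa [Function.comp_def] using this
      _ = (∫⁻ s, (‖w s‖₊ : ℝ≥0∞) ∂(volume.restrict (Iic (0 : ℝ)))) *
            (eLpNorm a' 2 ν * eLpNorm b' 2 ν) :=
          lintegral_mul_const' _ _ hC
      _ < ∞ := ENNReal.mul_lt_top hwint.2 hC.lt_top
  -- now the chain of equalities
  have hB : ∀ s : ℝ,
      ∫ x in t, a' x * (w s * b' (Ψ s x)) ∂ν = w s * ∫ x, a x * b (Ψ s x) ∂ν := by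
    intro s
    have h1 : (fun x => a' x * (w s * b' (Ψ s x))) = fun x => w s * (a' x * b' (Ψ s x)) := by
      funext x; ring
    rw [h1, integral_const_mul]
    congr 1
    rw [← integral_indicator htm]
    refine integral_congr_ae ?_
    filter_upwards [haa', ha0, hbs s] with x hxa hx0 hxb
    by_cases hxt : x ∈ t
    · rw [indicator_of_mem hxt, ← hxa, ← hxb]
    · rw [indicator_of_notMem hxt]
      have : a x = 0 := by simpa using hx0 hxt
      rw [this, zero_mul]
  calc
    ∫ x, a x * (∫ s in Iic (0 : ℝ), w s * b (Ψ s x)) ∂ν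
      = ∫ x, a' x * (∫ s in Iic (0 : ℝ), w s * b (Ψ s x)) ∂ν := by
        refine integral_congr_ae ?_
        filter_upwards [haa'] with x hx
        rw [hx]
    _ = ∫ x, t.indicator (fun y => a' y * (∫ s in Iic (0 : ℝ), w s * b (Ψ s y))) x ∂ν := by
        refine integral_congr_ae ?_
        filter_upwards [haa', ha0] with x hxa hx0
        by_cases hxt : x ∈ t
        · rw [indicator_of_mem hxt]
        · rw [indicator_of_notMem hxt]
          have hax : a x = 0 := by simpa using hx0 hxt
          rw [← hxa, hax, zero_mul]
    _ = ∫ x in t, a' x * (∫ s in Iic (0 : ℝ), w s * b (Ψ s x)) ∂ν := integral_indicator htm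
    _ = ∫ x in t, a' x * (∫ s in Iic (0 : ℝ), w s * b' (Ψ s x)) ∂ν := by
        refine integral_congr_ae ?_
        filter_upwards [hbc] with x hx
        rw [hx]
    _ = ∫ x in t, (∫ s in Iic (0 : ℝ), a' x * (w s * b' (Ψ s x))) ∂ν := by
        refine integral_congr_ae (Filter.Eventually.of_forall fun x => ?_)
        exact (integral_const_mul _ _).symm
    _ = ∫ s in Iic (0 : ℝ), ∫ x in t, a' x * (w s * b' (Ψ s x)) ∂ν := integral_integral_swap hK
    _ = ∫ s in Iic (0 : ℝ), w s * ∫ x, a x * b (Ψ s x) ∂ν := by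
        refine integral_congr_ae (Filter.Eventually.of_forall fun s => ?_)
        exact hB s

/-- The pointwise-in-`s` adjoint identity, via the reversing involution. -/
lemma key (ν : Measure X) (Φ : ℝ → X → X)
    (hmp : ∀ s : ℝ, MeasurePreserving (Φ s) ν ν)
    (hinv : ∀ s : ℝ, ∀ᵐ x ∂ν, Φ (-s) (Φ s x) = x)
    (R : X → X) (hRmp : MeasurePreserving R ν ν) (hRR : ∀ x, R (R x) = x)
    (hrev : ∀ s : ℝ, ∀ᵐ x ∂ν, Φ (-s) x = R (Φ s (R x)))
    (g h : X → ℝ) (hg : AEStronglyMeasurable g ν) (hh : AEStronglyMeasurable h ν) (s : ℝ) :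
    ∫ x, h x * g (Φ s x) ∂ν = ∫ x, g (R x) * h (R (Φ s x)) ∂ν := by
  have hmap : ν.map (Φ (-s)) = ν := (hmp (-s)).map_eq
  have hF : AEStronglyMeasurable (fun x => g (R x) * h (R (Φ s x))) ν := by
    have h1 : AEStronglyMeasurable (g ∘ R) ν :=
      hg.comp_quasiMeasurePreserving hRmp.quasiMeasurePreserving
    have h2 : AEStronglyMeasurable (h ∘ fun x => R (Φ s x)) ν :=
      hh.comp_quasiMeasurePreserving (hRmp.comp (hmp s)).quasiMeasurePreserving
    exact h1.mul h2
  have hG : AEStronglyMeasurable (fun x => g (Φ s x) * h x) ν := by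
    have h1 : AEStronglyMeasurable (g ∘ Φ s) ν :=
      hg.comp_quasiMeasurePreserving (hmp s).quasiMeasurePreserving
    exact h1.mul hh
  have e1 : ∫ x, g (R x) * h (R (Φ s x)) ∂ν
      = ∫ x, g (R (Φ (-s) x)) * h (R (Φ s (Φ (-s) x))) ∂ν := by
    have := integral_map (μ := ν) (φ := Φ (-s)) (hmp (-s)).measurable.aemeasurable
      (f := fun y => g (R y) * h (R (Φ s y))) (by rw [hmap]; exact hF)
    rw [hmap] at this
    exact this
  have e2 : ∫ x, g (R (Φ (-s) x)) * h (R (Φ s (Φ (-s) x))) ∂ν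
      = ∫ x, g (Φ s (R x)) * h (R x) ∂ν := by
    refine integral_congr_ae ?_
    filter_upwards [hinv (-s), hrev s] with y h1 h2
    rw [neg_neg] at h1
    rw [h1, h2, hRR]
  have e3 : ∫ x, g (Φ s x) * h x ∂ν = ∫ x, g (Φ s (R x)) * h (R x) ∂ν := by
    have := integral_map (μ := ν) (φ := R) hRmp.measurable.aemeasurable
      (f := fun y => g (Φ s y) * h y) (by rw [hRmp.map_eq]; exact hG)
    rw [hRmp.map_eq] at this
    exact this
  have e0 : ∫ x, h x * g (Φ s x) ∂ν = ∫ x, g (Φ s x) * h x ∂ν :=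
    integral_congr_ae (Filter.Eventually.of_forall fun x => mul_comm _ _)
  rw [e0, e3, ← e2, ← e1]

end Stmt11Aux

/-- Abstract adjoint identity (4.11): if the flow `Φ` is reversed by the
measure-preserving involution `R` (i.e. `Φ_{−s} = R ∘ Φ_s ∘ R` a.e.), then
`∫ h · Q_λ g dν = ∫ g(Rx) · Q_λ(h∘R)(x) dν` for all `g, h ∈ L²(ν)`. -/
theorem stmt11 {X : Type*} [MeasurableSpace X] (ν : Measure X)
    (Φ : ℝ → X → X) (hΦ : Measurable fun p : ℝ × X => Φ p.1 p.2)
    (hmp : ∀ s : ℝ, MeasurePreserving (Φ s) ν ν)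
    (hinv : ∀ s : ℝ, ∀ᵐ x ∂ν, Φ (-s) (Φ s x) = x)
    (R : X → X) (hRmp : MeasurePreserving R ν ν) (hRR : ∀ x, R (R x) = x)
    (hrev : ∀ s : ℝ, ∀ᵐ x ∂ν, Φ (-s) x = R (Φ s (R x)))
    (lam : ℝ) (hlam : 0 < lam)
    (g h : X → ℝ) (hg : MemLp g 2 ν) (hh : MemLp h 2 ν) :
    ∫ x, h x * (∫ s in Iic (0 : ℝ), lam * Real.exp (lam * s) * g (Φ s x)) ∂ν =
      ∫ x, g (R x) * (∫ s in Iic (0 : ℝ), lam * Real.exp (lam * s) * h (R (Φ s x))) ∂ν := by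
  have hΨ2 : Measurable fun p : ℝ × X => R (Φ p.1 p.2) := hRmp.measurable.comp hΦ
  have L := Stmt11Aux.side ν Φ hΦ hmp hlam h g hh hg
  have Rr := Stmt11Aux.side ν (fun s x => R (Φ s x)) hΨ2 (fun s => hRmp.comp (hmp s)) hlam
    (fun x => g (R x)) h (hg.comp_measurePreserving hRmp) hh
  have mid : (∫ s in Iic (0 : ℝ), lam * Real.exp (lam * s) * ∫ x, h x * g (Φ s x) ∂ν)
      = ∫ s in Iic (0 : ℝ), lam * Real.exp (lam * s) * ∫ x, g (R x) * h (R (Φ s x)) ∂ν := by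
    refine integral_congr_ae (Filter.Eventually.of_forall fun s => ?_)
    dsimp only
    rw [Stmt11Aux.key ν Φ hmp hinv R hRmp hRR hrev g h hg.aestronglyMeasurable
      hh.aestronglyMeasurable s]
  exact L.trans (mid.trans Rr.symm)
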